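/- For a deterministic abstract machine, low-lockstep noninterference (LLNI) implies end-to-end noninterference (EENI), provided that the indistinguishability relation is symmetric, every successful ending state is a low state, every successful ending state is stuck, and indistinguishability preserves membership in the set of ending states. -/

import Mathlib

/-- An abstract machine: states, a deterministic partial step function, and a
family of indistinguishability relations indexed by observation levels. -/
structure Machine (S O : Type) where
  step : S → Option S
  indist : O → S → S → Prop

namespace Machine

variable {S O : Type} (M : Machine S O)

/-- Single step relation. -/
def StepRel (s s' : S) : Prop := M.step s = some s'

/-- Reflexive-transitive closure of the step relation. -/
def Exec : S → S → Prop := Relation.ReflTransGen M.StepRel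

/-- A stuck state. -/
def Stuck (s : S) : Prop := M.step s = none

/-- `S ⇓ S'` : `S` executes to the stuck state `S'`. -/
def Halts (s s' : S) : Prop := M.Exec s s' ∧ M.Stuck s'

/-- A (possibly partial) trace of the machine starting from a state. -/
inductive IsTrace : S → List S → Prop where
  | single (s : S) : IsTrace s [s]
  | cons {s s' : S} {t : List S} : M.step s = some s' → IsTrace s' t →
      IsTrace s (s :: t)

/-- End-to-end noninterference. -/
def EENI (Start End_ : S → Prop) : Prop :=
  ∀ o s1 s2 s1' s2', Start s1 → Start s2 → M.indist o s1 s2 →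
    M.Halts s1 s1' → M.Halts s2 s2' → End_ s1' → End_ s2' →
    M.indist o s1' s2'

/-- Trace indistinguishability for LLNI. -/
inductive TIndist (Low : S → Prop) (R : S → S → Prop) : List S → List S → Prop where
  | lockstep {s1 s2 : S} {t1 t2 : List S} : Low s1 → Low s2 → R s1 s2 →
      TIndist Low R t1 t2 → TIndist Low R (s1 :: t1) (s2 :: t2)
  | highFilter {s1 : S} {t1 t2 : List S} : ¬ Low s1 → TIndist Low R t1 t2 →
      TIndist Low R (s1 :: t1) t2
  | nilR (t : List S) : TIndist Low R t []
  | symm {t1 t2 : List S} : TIndist Low R t1 t2 → TIndist Low R t2 t1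

/-- Low-lockstep noninterference. -/
def LLNI (Start : S → Prop) (Low : O → S → Prop) : Prop :=
  ∀ o s1 s2 t1 t2, Start s1 → Start s2 → M.indist o s1 s2 →
    M.IsTrace s1 t1 → M.IsTrace s2 t2 →
    TIndist (Low o) (M.indist o) t1 t2

end Machine


section Aux
variable {S O : Type} (M : Machine S O)

lemma trace_head {s : S} {t : List S} (h : M.IsTrace s t) : t.head? = some s := by
  cases h <;> rfl

lemma trace_chain {s : S} {t : List S} (h : M.IsTrace s t) :
    List.Chain' M.StepRel t := by
  induction h with
  | single s => exact List.isChain_singleton s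
  | cons hs ht ih =>
    refine List.isChain_cons.mpr ⟨?_, ih⟩
    intro y hy
    rw [trace_head M ht] at hy
    cases hy
    exact hs

lemma exec_trace {s s' : S} (h : M.Exec s s') :
    ∃ t, M.IsTrace s t ∧ s' ∈ t := by
  induction h using Relation.ReflTransGen.head_induction_on with
  | refl => exact ⟨[s'], Machine.IsTrace.single s', by simp⟩
  | head hs _ ih =>
    obtain ⟨t, ht, hm⟩ := ih
    exact ⟨_ :: t, Machine.IsTrace.cons hs ht, List.mem_cons_of_mem _ hm⟩

lemma tindist_end {End_ Low : S → Prop} {R : S → S → Prop}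
    (hsymm : ∀ s1 s2, R s1 s2 → R s2 s1)
    (hEndLow : ∀ s, End_ s → Low s)
    (hEndStuck : ∀ s, End_ s → M.Stuck s)
    (hEndIndist : ∀ s1 s2, R s1 s2 → (End_ s1 ↔ End_ s2))
    {t1 t2 : List S} (h : Machine.TIndist Low R t1 t2)
    (hc1 : List.Chain' M.StepRel t1) (hc2 : List.Chain' M.StepRel t2) :
    ∀ e1 e2, e1 ∈ t1 → e2 ∈ t2 → End_ e1 → End_ e2 → R e1 e2 := by
  induction h with
  | @lockstep s1 s2 t1 t2 hl1 hl2 hr _ ih =>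
    intro e1 e2 he1 he2 hE1 hE2
    rcases List.mem_cons.mp he1 with rfl | he1 <;>
      rcases List.mem_cons.mp he2 with rfl | he2
    · exact hr
    · exfalso
      have hE2' : End_ s2 := (hEndIndist _ _ hr).mp hE1
      cases t2 with
      | nil => exact absurd he2 List.not_mem_nil
      | cons x xs =>
        have := (List.isChain_cons_cons.mp hc2).1
        exact Option.some_ne_none _ ((hEndStuck _ hE2').symm.trans this).symm
    · exfalso
      have hE1' : End_ s1 := (hEndIndist _ _ hr).mpr hE2
      cases t1 with
      | nil => exact absurd he1 List.not_mem_nil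
      | cons x xs =>
        have := (List.isChain_cons_cons.mp hc1).1
        exact Option.some_ne_none _ ((hEndStuck _ hE1').symm.trans this).symm
    · exact ih hc1.tail hc2.tail _ _ he1 he2 hE1 hE2
  | @highFilter s1 t1 t2 hnl _ ih =>
    intro e1 e2 he1 he2 hE1 hE2
    rcases List.mem_cons.mp he1 with rfl | he1
    · exact absurd (hEndLow _ hE1) hnl
    · exact ih hc1.tail hc2 _ _ he1 he2 hE1 hE2
  | nilR t =>
    intro e1 e2 _ he2 _ _
    exact absurd he2 List.not_mem_nil
  | symm _ ih =>
    intro e1 e2 he1 he2 hE1 hE2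
    exact hsymm _ _ (ih hc2 hc1 _ _ he2 he1 hE2 hE1)

end Aux

/-- LLNI implies EENI, provided indistinguishability is symmetric, ending
states are low, ending states are stuck, and indistinguishability preserves
membership in the set of ending states. -/
theorem llni_implies_eeni {S O : Type} (M : Machine S O)
    (Start End_ : S → Prop) (Low : O → S → Prop)
    (hsymm : ∀ o s1 s2, M.indist o s1 s2 → M.indist o s2 s1)
    (hEndLow : ∀ o s, End_ s → Low o s)
    (hEndStuck : ∀ s, End_ s → M.Stuck s)
    (hEndIndist : ∀ o s1 s2, M.indist o s1 s2 → (End_ s1 ↔ End_ s2))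
    (hllni : M.LLNI Start Low) :
    M.EENI Start End_ := by
  intro o s1 s2 s1' s2' hS1 hS2 hI h1 h2 hE1 hE2
  obtain ⟨t1, ht1, hm1⟩ := exec_trace M h1.1
  obtain ⟨t2, ht2, hm2⟩ := exec_trace M h2.1
  have hT := hllni o s1 s2 t1 t2 hS1 hS2 hI ht1 ht2
  exact tindist_end M (hsymm o) (hEndLow o) hEndStuck (hEndIndist o) hT
    (trace_chain M ht1) (trace_chain M ht2) s1' s2' hm1 hm2 hE1 hE2
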